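/- Let a_1, a_2 ∈ F_p^n, b_1, b_2 ∈ F_p, and θ := lv(a_1, a_2) = (supp(a_1) ∪ supp(a_2)) \ supp(a_1 + a_2). Then every clause of F(a_1 + a_2, b_1 + b_2) is semantically entailed by F(a_1,b_1) ∧ F(a_2,b_2) ∧ V; moreover each such clause can be derived from these formulas by a resolution derivation of length at most 2(p^{|θ|} − 1) (possibly deriving a subclause). -/

import Mathlib

/-! Resolution proof system: clauses are finite sets of literals, a literal is
a pair (variable, polarity). -/

variable {V : Type} [DecidableEq V]

/-- `C` is a resolvent of `C₁` and `C₂` (on some variable `x`). -/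
def Resolvent (C₁ C₂ C : Finset (V × Bool)) : Prop :=
  ∃ x : V, (x, true) ∈ C₁ ∧ (x, false) ∈ C₂ ∧
    C = C₁.erase (x, true) ∪ C₂.erase (x, false)

/-- A resolution derivation from the clause set `A`, newest clause first:
each listed clause is a resolvent of two clauses that are in `A` or occur later
in the list. -/
def IsDerivation (A : Set (Finset (V × Bool))) : List (Finset (V × Bool)) → Prop
  | [] => True
  | c :: rest => IsDerivation A rest ∧
      ∃ c₁ c₂, (c₁ ∈ A ∨ c₁ ∈ rest) ∧ (c₂ ∈ A ∨ c₂ ∈ rest) ∧ Resolvent c₁ c₂ c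

/-- `Derives A n B` : every clause of `B` can be obtained from `A` by a single
resolution derivation adding at most `n` resolvents. -/
def Derives (A : Set (Finset (V × Bool))) (n : ℕ) (B : Set (Finset (V × Bool))) : Prop :=
  ∃ L : List (Finset (V × Bool)), IsDerivation A L ∧ L.length ≤ n ∧
    B ⊆ A ∪ {c | c ∈ L}

/-- A Boolean assignment satisfies a clause if it makes some literal true. -/
def SatClause (φ : V → Bool) (C : Finset (V × Bool)) : Prop :=
  ∃ l ∈ C, φ l.1 = l.2

/-- An assignment satisfies a set of clauses if it satisfies each of them. -/
def SatSet (φ : V → Bool) (A : Set (Finset (V × Bool))) : Prop :=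
  ∀ C ∈ A, SatClause φ C

/-! Encoding of linear equations over `F_p` as CNF formulas, with variables
`ξ_{i,k}` for `i : Fin n`, `k : ZMod p`. -/

/-- `supp` of a vector: the set of indices with nonzero entry. -/
def suppV {n : ℕ} {K : Type*} [Zero K] [DecidableEq K] (a : Fin n → K) : Finset (Fin n) :=
  Finset.univ.filter (fun i => a i ≠ 0)

/-- `P(a,c)` : assignments violating the equation `a·x = c`, supported on `supp(a)`. -/
def PViol {n p : ℕ} (a : Fin n → ZMod p) (c : ZMod p) : Set (Fin n → ZMod p) :=
  {x | dotProduct a x ≠ c ∧ suppV x ⊆ suppV a}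

/-- The clause `C_a(x) = ⋁_{i ∈ supp(a)} ¬ξ_{i,x_i}`. -/
def CCl {n p : ℕ} (a x : Fin n → ZMod p) : Finset ((Fin n × ZMod p) × Bool) :=
  (suppV a).image (fun i => ((i, x i), false))

/-- The CNF formula `F(a,c)` for a single equation `a·x = c`. -/
def FEq {n p : ℕ} (a : Fin n → ZMod p) (c : ZMod p) :
    Set (Finset ((Fin n × ZMod p) × Bool)) :=
  (fun x => CCl a x) '' (PViol a c)

/-- The CNF formula `F(A,b)` for a system of equations. -/
def FSys {m n p : ℕ} (A : Matrix (Fin m) (Fin n) (ZMod p)) (b : Fin m → ZMod p) :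
    Set (Finset ((Fin n × ZMod p) × Bool)) :=
  ⋃ i, FEq (A i) (b i)

/-- The clauses `V = ⋀_i ⋁_k ξ_{i,k}`. -/
def VCl (n p : ℕ) [NeZero p] : Set (Finset ((Fin n × ZMod p) × Bool)) :=
  {C | ∃ i : Fin n, C = Finset.univ.image (fun k : ZMod p => ((i, k), true))}


section ResAux
variable {V : Type} [DecidableEq V]

/-- Single-clause derivability with cost bound. -/
def DOne (A : Set (Finset (V × Bool))) (n : ℕ) (C : Finset (V × Bool)) : Prop :=
  ∃ L : List (Finset (V × Bool)), IsDerivation A L ∧ L.length ≤ n ∧ (C ∈ A ∨ C ∈ L)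

lemma isDerivation_append {A : Set (Finset (V × Bool))} :
    ∀ {L₁ L₂ : List (Finset (V × Bool))},
      IsDerivation A L₁ → IsDerivation A L₂ → IsDerivation A (L₁ ++ L₂)
  | [], _, _, h₂ => h₂
  | c :: rest, L₂, ⟨hr, c₁, c₂, m₁, m₂, hres⟩, h₂ =>
    ⟨isDerivation_append hr h₂, c₁, c₂,
      m₁.imp id (fun h => List.mem_append_left _ h),
      m₂.imp id (fun h => List.mem_append_left _ h), hres⟩

lemma DOne.base {A : Set (Finset (V × Bool))} {C} (h : C ∈ A) : DOne A 0 C :=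
  ⟨[], trivial, le_refl 0, Or.inl h⟩

lemma DOne.mono {A : Set (Finset (V × Bool))} {n m : ℕ} {C} (h : DOne A n C)
    (hnm : n ≤ m) : DOne A m C := by
  obtain ⟨L, d, l, mem⟩ := h
  exact ⟨L, d, le_trans l hnm, mem⟩

lemma DOne.res {A : Set (Finset (V × Bool))} {n₁ n₂ : ℕ} {C₁ C₂ C}
    (h₁ : DOne A n₁ C₁) (h₂ : DOne A n₂ C₂) (h : Resolvent C₁ C₂ C) :
    DOne A (n₁ + n₂ + 1) C := by
  obtain ⟨L₁, d₁, l₁, m₁⟩ := h₁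
  obtain ⟨L₂, d₂, l₂, m₂⟩ := h₂
  refine ⟨C :: (L₁ ++ L₂), ⟨isDerivation_append d₁ d₂, C₁, C₂,
    m₁.imp id (fun h => List.mem_append_left _ h),
    m₂.imp id (fun h => List.mem_append_right _ h), h⟩, ?_,
    Or.inr List.mem_cons_self⟩
  simp only [List.length_cons, List.length_append]
  omega

lemma resolvent_sound {φ : V → Bool} {C₁ C₂ C : Finset (V × Bool)}
    (h : Resolvent C₁ C₂ C) (h₁ : SatClause φ C₁) (h₂ : SatClause φ C₂) :
    SatClause φ C := by
  obtain ⟨x, hx₁, hx₂, rfl⟩ := h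
  by_cases hφ : φ x = true
  · obtain ⟨l, hl, hml⟩ := h₂
    refine ⟨l, Finset.mem_union_right _ (Finset.mem_erase.mpr ⟨?_, hl⟩), hml⟩
    rintro rfl
    simp only at hml
    rw [hφ] at hml
    exact Bool.true_eq_false.mp hml
  · obtain ⟨l, hl, hml⟩ := h₁
    refine ⟨l, Finset.mem_union_left _ (Finset.mem_erase.mpr ⟨?_, hl⟩), hml⟩
    rintro rfl
    exact hφ hml

lemma isDerivation_sound {φ : V → Bool} {A : Set (Finset (V × Bool))} (hA : SatSet φ A) :
    ∀ {L : List (Finset (V × Bool))}, IsDerivation A L → ∀ C ∈ L, SatClause φ C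
  | [], _, C, hC => absurd hC List.not_mem_nil
  | c :: rest, ⟨hr, c₁, c₂, m₁, m₂, hres⟩, C, hC => by
    have ih := isDerivation_sound hA hr
    rcases List.mem_cons.mp hC with rfl | hC
    · exact resolvent_sound hres (m₁.elim (hA c₁) (ih c₁)) (m₂.elim (hA c₂) (ih c₂))
    · exact ih C hC

lemma DOne.sound {φ : V → Bool} {A : Set (Finset (V × Bool))} {nn : ℕ} {C}
    (h : DOne A nn C) (hA : SatSet φ A) : SatClause φ C := by
  obtain ⟨L, d, _, mem⟩ := h
  exact mem.elim (hA C) (isDerivation_sound hA d C)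

lemma SatClause.mono {φ : V → Bool} {C C' : Finset (V × Bool)} (h : C' ⊆ C)
    (hs : SatClause φ C') : SatClause φ C := by
  obtain ⟨l, hl, hml⟩ := hs
  exact ⟨l, h hl, hml⟩

lemma DOne.toDerives {A : Set (Finset (V × Bool))} {nn : ℕ} {C}
    (h : DOne A nn C) : Derives A nn {C} := by
  obtain ⟨L, d, l, mem⟩ := h
  refine ⟨L, d, l, ?_⟩
  intro c hc
  rcases hc with rfl
  exact mem.imp id id

end ResAux

section DotAux
variable {p n : ℕ}

lemma dot_congr (a x y : Fin n → ZMod p) (h : ∀ i, a i ≠ 0 → x i = y i) :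
    dotProduct a x = dotProduct a y := by
  unfold dotProduct
  refine Finset.sum_congr rfl (fun i _ => ?_)
  by_cases hi : a i = 0
  · simp [hi]
  · rw [h i hi]

lemma restrict_mem (a z : Fin n → ZMod p) (b : ZMod p)
    (h : dotProduct a z ≠ b) :
    (suppV a).image (fun i => ((i, z i), false)) ∈ FEq a b := by
  refine ⟨fun i => if a i ≠ 0 then z i else 0, ⟨?_, ?_⟩, ?_⟩
  · rwa [dot_congr a _ z (fun i hi => by simp [hi])]
  · intro i hi
    simp only [suppV, Finset.mem_filter, Finset.mem_univ, true_and] at hi ⊢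
    intro hzero
    apply hi
    simp [hzero]
  · unfold CCl
    refine Finset.image_congr (fun i hi => ?_)
    have hi' : a i ≠ 0 := by
      have := Finset.mem_coe.mp hi
      simp only [suppV, Finset.mem_filter, Finset.mem_univ, true_and] at this
      exact this
    simp [hi']

lemma supp_add_subset (a₁ a₂ : Fin n → ZMod p) :
    suppV (a₁ + a₂) ⊆ suppV a₁ ∪ suppV a₂ := by
  intro i hi
  simp only [suppV, Finset.mem_filter, Finset.mem_univ, true_and, Finset.mem_union,
    Pi.add_apply] at hi ⊢
  by_contra hc
  push_neg at hc
  rw [hc.1, hc.2, add_zero] at hi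
  exact hi rfl

end DotAux

/-- Cost function for the resolution of `k` cancelled variables. -/
def costF (p : ℕ) : ℕ → ℕ
  | 0 => 0
  | k + 1 => p * (costF p k + 1)

lemma costF_add_two_le {p : ℕ} (hp : 2 ≤ p) : ∀ k, costF p k + 2 ≤ 2 * p ^ k
  | 0 => by simp [costF]
  | k + 1 => by
    have ih := costF_add_two_le hp k
    have : p * (costF p k + 2) ≤ p * (2 * p ^ k) := Nat.mul_le_mul_left p ih
    calc costF p (k + 1) + 2 = p * costF p k + p + 2 := by
          simp [costF]; ring
      _ ≤ p * costF p k + 2 * p := by omega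
      _ = p * (costF p k + 2) := by ring
      _ ≤ p * (2 * p ^ k) := this
      _ = 2 * p ^ (k + 1) := by ring

lemma costF_le {p : ℕ} (hp : 2 ≤ p) (k : ℕ) : costF p k ≤ 2 * (p ^ k - 1) := by
  have h1 : 1 ≤ p ^ k := Nat.one_le_pow _ _ (by omega)
  have h2 := costF_add_two_le hp k
  omega

section MainInd
variable {p n : ℕ} [Fact (Nat.Prime p)]

lemma main_ind (a₁ a₂ : Fin n → ZMod p) (b₁ b₂ : ZMod p) :
    ∀ s : Finset (Fin n), s ⊆ (suppV a₁ ∪ suppV a₂) \ suppV (a₁ + a₂) →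
    ∀ z : Fin n → ZMod p, dotProduct (a₁ + a₂) z ≠ b₁ + b₂ →
    ∃ C', C' ⊆ (suppV (a₁ + a₂) ∪ (((suppV a₁ ∪ suppV a₂) \ suppV (a₁ + a₂)) \ s)).image
        (fun i => ((i, z i), false)) ∧
      DOne (FEq a₁ b₁ ∪ FEq a₂ b₂ ∪ VCl n p) (costF p s.card) C' := by
  intro s
  induction s using Finset.induction_on with
  | empty =>
    intro _ z hz
    rw [Finset.sdiff_empty, Finset.union_sdiff_of_subset (supp_add_subset a₁ a₂)]
    rw [add_dotProduct] at hz
    have : dotProduct a₁ z ≠ b₁ ∨ dotProduct a₂ z ≠ b₂ := by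
      by_contra hc
      push_neg at hc
      rw [hc.1, hc.2] at hz
      exact hz rfl
    rcases this with h | h
    · refine ⟨(suppV a₁).image (fun i => ((i, z i), false)),
        Finset.image_subset_image Finset.subset_union_left,
        DOne.base (Or.inl (Or.inl (restrict_mem a₁ z b₁ h)))⟩
    · refine ⟨(suppV a₂).image (fun i => ((i, z i), false)),
        Finset.image_subset_image Finset.subset_union_right,
        DOne.base (Or.inl (Or.inr (restrict_mem a₂ z b₂ h)))⟩
  | @insert i s hi ih =>
    intro hins z hz
    haveI : NeZero p := ⟨(Fact.out : p.Prime).ne_zero⟩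
    set θ := (suppV a₁ ∪ suppV a₂) \ suppV (a₁ + a₂) with hθ
    have hiθ : i ∈ θ := hins (Finset.mem_insert_self i s)
    have hsθ : s ⊆ θ := fun j hj => hins (Finset.mem_insert_of_mem hj)
    have hia : (a₁ + a₂) i = 0 := by
      have := (Finset.mem_sdiff.mp hiθ).2
      simp only [suppV, Finset.mem_filter, Finset.mem_univ, true_and, not_not] at this
      exact this
    set A := FEq a₁ b₁ ∪ FEq a₂ b₂ ∪ VCl n p with hA
    set m := costF p s.card with hm
    set D' := (suppV (a₁ + a₂) ∪ (θ \ insert i s)).image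
        (fun j => ((j, z j), false)) with hD'
    -- for each k, a clause Ck k
    have hstep : ∀ k : ZMod p, ∃ C', C' ⊆ D' ∪ {((i, k), false)} ∧ DOne A m C' := by
      intro k
      have hzk : dotProduct (a₁ + a₂) (Function.update z i k) = 
          dotProduct (a₁ + a₂) z := by
        refine dot_congr _ _ _ (fun j hj => ?_)
        have : j ≠ i := fun h => hj (h ▸ hia)
        exact Function.update_of_ne this _ _
      obtain ⟨C', hsub, hd⟩ := ih hsθ (Function.update z i k) (by rwa [hzk])
      refine ⟨C', fun l hl => ?_, hd⟩
      obtain ⟨j, hj, rfl⟩ := Finset.mem_image.mp (hsub hl)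
      by_cases hji : j = i
      · subst hji
        simp [Function.update_self]
      · rw [Function.update_of_ne hji]
        refine Finset.mem_union_left _ (Finset.mem_image.mpr ⟨j, ?_, rfl⟩)
        rcases Finset.mem_union.mp hj with h | h
        · exact Finset.mem_union_left _ h
        · refine Finset.mem_union_right _ ?_
          rw [Finset.mem_sdiff] at h ⊢
          exact ⟨h.1, fun hc => by
            rcases Finset.mem_insert.mp hc with rfl | hc
            · exact hji rfl
            · exact h.2 hc⟩
    choose Ck hCsub hCd using hstep
    -- inner induction over resolved values
    have inner : ∀ K : Finset (ZMod p), ∃ G,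
        G ⊆ D' ∪ (Finset.univ \ K).image (fun k => (((i : Fin n), k), true)) ∧
        DOne A (K.card * (m + 1)) G := by
      intro K
      induction K using Finset.induction_on with
      | empty =>
        refine ⟨Finset.univ.image (fun k : ZMod p => (((i : Fin n), k), true)), ?_, ?_⟩
        · rw [Finset.sdiff_empty]
          exact Finset.subset_union_right
        · simpa using DOne.base (A := A) (Or.inr ⟨i, rfl⟩)
      | @insert k K hk ihK =>
        obtain ⟨G, hGsub, hGd⟩ := ihK
        have hcard : (insert k K).card * (m + 1) = K.card * (m + 1) + m + 1 := by
          rw [Finset.card_insert_of_notMem hk]; ring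
        by_cases hmem : (((i : Fin n), k), true) ∈ G
        · by_cases hck : (((i : Fin n), k), false) ∈ Ck k
          · refine ⟨G.erase (((i : Fin n), k), true) ∪ (Ck k).erase (((i : Fin n), k), false),
              ?_, ?_⟩
            · intro l hl
              rcases Finset.mem_union.mp hl with hl | hl
              · obtain ⟨hne, hG⟩ := Finset.mem_erase.mp hl
                rcases Finset.mem_union.mp (hGsub hG) with h | h
                · exact Finset.mem_union_left _ h
                · obtain ⟨k', hk', rfl⟩ := Finset.mem_image.mp h
                  refine Finset.mem_union_right _ (Finset.mem_image.mpr ⟨k', ?_, rfl⟩)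
                  rw [Finset.mem_sdiff] at hk' ⊢
                  refine ⟨Finset.mem_univ _, fun hc => ?_⟩
                  rcases Finset.mem_insert.mp hc with rfl | hc
                  · exact hne rfl
                  · exact hk'.2 hc
              · obtain ⟨hne, hC⟩ := Finset.mem_erase.mp hl
                rcases Finset.mem_union.mp (hCsub k hC) with h | h
                · exact Finset.mem_union_left _ h
                · exact absurd (Finset.mem_singleton.mp h) hne
            · rw [hcard]
              exact DOne.res hGd (hCd k) ⟨((i : Fin n), k), hmem, hck, rfl⟩
          · refine ⟨Ck k, fun l hl => ?_, (hCd k).mono ?_⟩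
            · rcases Finset.mem_union.mp (hCsub k hl) with h | h
              · exact Finset.mem_union_left _ h
              · rw [Finset.mem_singleton.mp h] at hl
                exact absurd hl hck
            · rw [hcard]; omega
        · refine ⟨G, fun l hl => ?_, hGd.mono ?_⟩
          · rcases Finset.mem_union.mp (hGsub hl) with h | h
            · exact Finset.mem_union_left _ h
            · obtain ⟨k', hk', rfl⟩ := Finset.mem_image.mp h
              refine Finset.mem_union_right _ (Finset.mem_image.mpr ⟨k', ?_, rfl⟩)
              rw [Finset.mem_sdiff] at hk' ⊢
              refine ⟨Finset.mem_univ _, fun hc => ?_⟩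
              rcases Finset.mem_insert.mp hc with rfl | hc
              · exact hmem hl
              · exact hk'.2 hc
          · rw [hcard]; omega
    obtain ⟨G, hGsub, hGd⟩ := inner Finset.univ
    refine ⟨G, ?_, ?_⟩
    · rwa [Finset.sdiff_self, Finset.image_empty, Finset.union_empty] at hGsub
    · have hcard : (Finset.univ : Finset (ZMod p)).card = p := by
        rw [Finset.card_univ, ZMod.card]
      rw [Finset.card_insert_of_notMem hi]
      have : costF p (s.card + 1) = p * (m + 1) := rfl
      rw [this]
      rw [hcard] at hGd
      exact hGd

end MainInd

/-- Sum resolution: every clause of `F(a₁+a₂, b₁+b₂)` is entailed by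
`F(a₁,b₁) ∧ F(a₂,b₂) ∧ V`, and (some subclause of) it has a resolution
derivation of length at most `2(p^{|θ|} − 1)` where `θ = lv(a₁,a₂)`. -/
theorem stmt9 {p n : ℕ} [Fact (Nat.Prime p)]
    (a₁ a₂ : Fin n → ZMod p) (b₁ b₂ : ZMod p) :
    ∀ C ∈ FEq (a₁ + a₂) (b₁ + b₂),
      (∀ φ : (Fin n × ZMod p) → Bool,
          SatSet φ (FEq a₁ b₁ ∪ FEq a₂ b₂ ∪ VCl n p) → SatClause φ C) ∧
      ∃ C' ⊆ C, Derives (FEq a₁ b₁ ∪ FEq a₂ b₂ ∪ VCl n p)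
          (2 * (p ^ (((suppV a₁ ∪ suppV a₂) \ suppV (a₁ + a₂)).card) - 1)) {C'} := by
  intro C hC
  haveI : NeZero p := ⟨(Fact.out : p.Prime).ne_zero⟩
  obtain ⟨x, hx, rfl⟩ := hC
  have hdot : dotProduct (a₁ + a₂) x ≠ b₁ + b₂ := hx.1
  obtain ⟨C', hsub, hd⟩ := main_ind a₁ a₂ b₁ b₂
    ((suppV a₁ ∪ suppV a₂) \ suppV (a₁ + a₂)) (le_refl _) x hdot
  rw [Finset.sdiff_self, Finset.union_empty] at hsub
  have hsub' : C' ⊆ CCl (a₁ + a₂) x := hsub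
  constructor
  · intro φ hφ
    exact SatClause.mono hsub' (hd.sound hφ)
  · refine ⟨C', hsub', ?_⟩
    exact (hd.mono (costF_le (Fact.out : p.Prime).two_le _)).toDerives
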